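/- There exist two connected simple graphs on 6 vertices, each having a unique perfect matching, which are not isomorphic to each other but whose adjacency matrices have the same characteristic polynomial (i.e., they are iso-spectral). -/

import Mathlib

open Matrix

/-- A simple graph has a unique perfect matching (unique 1-factor) if there is
exactly one perfect matching. -/
def HasUniquePM {V : Type*} (G : SimpleGraph V) : Prop :=
  ∃! M : G.Subgraph, M.IsPerfectMatching

/-- The integer adjacency matrix of a finite simple graph. -/
noncomputable def adjMat {V : Type*} [Fintype V] [DecidableEq V]
    (G : SimpleGraph V) : Matrix V V ℤ :=
  letI := Classical.decRel G.Adj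
  G.adjMatrix ℤ

open Polynomial in

theorem fsucc_2_0 : Fin.succ (0 : Fin 2) = (1 : Fin 3) := by decide
theorem fcast_2_0 : Fin.castSucc (0 : Fin 2) = (0 : Fin 3) := by decide
theorem fsucc_2_1 : Fin.succ (1 : Fin 2) = (2 : Fin 3) := by decide
theorem fcast_2_1 : Fin.castSucc (1 : Fin 2) = (1 : Fin 3) := by decide
theorem fsucc_3_0 : Fin.succ (0 : Fin 3) = (1 : Fin 4) := by decide
theorem fcast_3_0 : Fin.castSucc (0 : Fin 3) = (0 : Fin 4) := by decide
theorem fsucc_3_1 : Fin.succ (1 : Fin 3) = (2 : Fin 4) := by decide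
theorem fcast_3_1 : Fin.castSucc (1 : Fin 3) = (1 : Fin 4) := by decide
theorem fsucc_3_2 : Fin.succ (2 : Fin 3) = (3 : Fin 4) := by decide
theorem fcast_3_2 : Fin.castSucc (2 : Fin 3) = (2 : Fin 4) := by decide
theorem fsucc_4_0 : Fin.succ (0 : Fin 4) = (1 : Fin 5) := by decide
theorem fcast_4_0 : Fin.castSucc (0 : Fin 4) = (0 : Fin 5) := by decide
theorem fsucc_4_1 : Fin.succ (1 : Fin 4) = (2 : Fin 5) := by decide
theorem fcast_4_1 : Fin.castSucc (1 : Fin 4) = (1 : Fin 5) := by decide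
theorem fsucc_4_2 : Fin.succ (2 : Fin 4) = (3 : Fin 5) := by decide
theorem fcast_4_2 : Fin.castSucc (2 : Fin 4) = (2 : Fin 5) := by decide
theorem fsucc_4_3 : Fin.succ (3 : Fin 4) = (4 : Fin 5) := by decide
theorem fcast_4_3 : Fin.castSucc (3 : Fin 4) = (3 : Fin 5) := by decide
theorem fsucc_5_0 : Fin.succ (0 : Fin 5) = (1 : Fin 6) := by decide
theorem fcast_5_0 : Fin.castSucc (0 : Fin 5) = (0 : Fin 6) := by decide
theorem fsucc_5_1 : Fin.succ (1 : Fin 5) = (2 : Fin 6) := by decide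
theorem fcast_5_1 : Fin.castSucc (1 : Fin 5) = (1 : Fin 6) := by decide
theorem fsucc_5_2 : Fin.succ (2 : Fin 5) = (3 : Fin 6) := by decide
theorem fcast_5_2 : Fin.castSucc (2 : Fin 5) = (2 : Fin 6) := by decide
theorem fsucc_5_3 : Fin.succ (3 : Fin 5) = (4 : Fin 6) := by decide
theorem fcast_5_3 : Fin.castSucc (3 : Fin 5) = (3 : Fin 6) := by decide
theorem fsucc_5_4 : Fin.succ (4 : Fin 5) = (5 : Fin 6) := by decide
theorem fcast_5_4 : Fin.castSucc (4 : Fin 5) = (4 : Fin 6) := by decide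
theorem fsa_3_0_0 : Fin.succAbove (0 : Fin 3) (0 : Fin 2) = (1 : Fin 3) := by decide
theorem fsa_3_0_1 : Fin.succAbove (0 : Fin 3) (1 : Fin 2) = (2 : Fin 3) := by decide
theorem fsa_3_1_0 : Fin.succAbove (1 : Fin 3) (0 : Fin 2) = (0 : Fin 3) := by decide
theorem fsa_3_1_1 : Fin.succAbove (1 : Fin 3) (1 : Fin 2) = (2 : Fin 3) := by decide
theorem fsa_3_2_0 : Fin.succAbove (2 : Fin 3) (0 : Fin 2) = (0 : Fin 3) := by decide
theorem fsa_3_2_1 : Fin.succAbove (2 : Fin 3) (1 : Fin 2) = (1 : Fin 3) := by decide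
theorem fsa_4_0_0 : Fin.succAbove (0 : Fin 4) (0 : Fin 3) = (1 : Fin 4) := by decide
theorem fsa_4_0_1 : Fin.succAbove (0 : Fin 4) (1 : Fin 3) = (2 : Fin 4) := by decide
theorem fsa_4_0_2 : Fin.succAbove (0 : Fin 4) (2 : Fin 3) = (3 : Fin 4) := by decide
theorem fsa_4_1_0 : Fin.succAbove (1 : Fin 4) (0 : Fin 3) = (0 : Fin 4) := by decide
theorem fsa_4_1_1 : Fin.succAbove (1 : Fin 4) (1 : Fin 3) = (2 : Fin 4) := by decide
theorem fsa_4_1_2 : Fin.succAbove (1 : Fin 4) (2 : Fin 3) = (3 : Fin 4) := by decide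
theorem fsa_4_2_0 : Fin.succAbove (2 : Fin 4) (0 : Fin 3) = (0 : Fin 4) := by decide
theorem fsa_4_2_1 : Fin.succAbove (2 : Fin 4) (1 : Fin 3) = (1 : Fin 4) := by decide
theorem fsa_4_2_2 : Fin.succAbove (2 : Fin 4) (2 : Fin 3) = (3 : Fin 4) := by decide
theorem fsa_4_3_0 : Fin.succAbove (3 : Fin 4) (0 : Fin 3) = (0 : Fin 4) := by decide
theorem fsa_4_3_1 : Fin.succAbove (3 : Fin 4) (1 : Fin 3) = (1 : Fin 4) := by decide
theorem fsa_4_3_2 : Fin.succAbove (3 : Fin 4) (2 : Fin 3) = (2 : Fin 4) := by decide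
theorem fsa_5_0_0 : Fin.succAbove (0 : Fin 5) (0 : Fin 4) = (1 : Fin 5) := by decide
theorem fsa_5_0_1 : Fin.succAbove (0 : Fin 5) (1 : Fin 4) = (2 : Fin 5) := by decide
theorem fsa_5_0_2 : Fin.succAbove (0 : Fin 5) (2 : Fin 4) = (3 : Fin 5) := by decide
theorem fsa_5_0_3 : Fin.succAbove (0 : Fin 5) (3 : Fin 4) = (4 : Fin 5) := by decide
theorem fsa_5_1_0 : Fin.succAbove (1 : Fin 5) (0 : Fin 4) = (0 : Fin 5) := by decide
theorem fsa_5_1_1 : Fin.succAbove (1 : Fin 5) (1 : Fin 4) = (2 : Fin 5) := by decide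
theorem fsa_5_1_2 : Fin.succAbove (1 : Fin 5) (2 : Fin 4) = (3 : Fin 5) := by decide
theorem fsa_5_1_3 : Fin.succAbove (1 : Fin 5) (3 : Fin 4) = (4 : Fin 5) := by decide
theorem fsa_5_2_0 : Fin.succAbove (2 : Fin 5) (0 : Fin 4) = (0 : Fin 5) := by decide
theorem fsa_5_2_1 : Fin.succAbove (2 : Fin 5) (1 : Fin 4) = (1 : Fin 5) := by decide
theorem fsa_5_2_2 : Fin.succAbove (2 : Fin 5) (2 : Fin 4) = (3 : Fin 5) := by decide
theorem fsa_5_2_3 : Fin.succAbove (2 : Fin 5) (3 : Fin 4) = (4 : Fin 5) := by decide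
theorem fsa_5_3_0 : Fin.succAbove (3 : Fin 5) (0 : Fin 4) = (0 : Fin 5) := by decide
theorem fsa_5_3_1 : Fin.succAbove (3 : Fin 5) (1 : Fin 4) = (1 : Fin 5) := by decide
theorem fsa_5_3_2 : Fin.succAbove (3 : Fin 5) (2 : Fin 4) = (2 : Fin 5) := by decide
theorem fsa_5_3_3 : Fin.succAbove (3 : Fin 5) (3 : Fin 4) = (4 : Fin 5) := by decide
theorem fsa_5_4_0 : Fin.succAbove (4 : Fin 5) (0 : Fin 4) = (0 : Fin 5) := by decide
theorem fsa_5_4_1 : Fin.succAbove (4 : Fin 5) (1 : Fin 4) = (1 : Fin 5) := by decide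
theorem fsa_5_4_2 : Fin.succAbove (4 : Fin 5) (2 : Fin 4) = (2 : Fin 5) := by decide
theorem fsa_5_4_3 : Fin.succAbove (4 : Fin 5) (3 : Fin 4) = (3 : Fin 5) := by decide
theorem fsa_6_0_0 : Fin.succAbove (0 : Fin 6) (0 : Fin 5) = (1 : Fin 6) := by decide
theorem fsa_6_0_1 : Fin.succAbove (0 : Fin 6) (1 : Fin 5) = (2 : Fin 6) := by decide
theorem fsa_6_0_2 : Fin.succAbove (0 : Fin 6) (2 : Fin 5) = (3 : Fin 6) := by decide
theorem fsa_6_0_3 : Fin.succAbove (0 : Fin 6) (3 : Fin 5) = (4 : Fin 6) := by decide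
theorem fsa_6_0_4 : Fin.succAbove (0 : Fin 6) (4 : Fin 5) = (5 : Fin 6) := by decide
theorem fsa_6_1_0 : Fin.succAbove (1 : Fin 6) (0 : Fin 5) = (0 : Fin 6) := by decide
theorem fsa_6_1_1 : Fin.succAbove (1 : Fin 6) (1 : Fin 5) = (2 : Fin 6) := by decide
theorem fsa_6_1_2 : Fin.succAbove (1 : Fin 6) (2 : Fin 5) = (3 : Fin 6) := by decide
theorem fsa_6_1_3 : Fin.succAbove (1 : Fin 6) (3 : Fin 5) = (4 : Fin 6) := by decide
theorem fsa_6_1_4 : Fin.succAbove (1 : Fin 6) (4 : Fin 5) = (5 : Fin 6) := by decide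
theorem fsa_6_2_0 : Fin.succAbove (2 : Fin 6) (0 : Fin 5) = (0 : Fin 6) := by decide
theorem fsa_6_2_1 : Fin.succAbove (2 : Fin 6) (1 : Fin 5) = (1 : Fin 6) := by decide
theorem fsa_6_2_2 : Fin.succAbove (2 : Fin 6) (2 : Fin 5) = (3 : Fin 6) := by decide
theorem fsa_6_2_3 : Fin.succAbove (2 : Fin 6) (3 : Fin 5) = (4 : Fin 6) := by decide
theorem fsa_6_2_4 : Fin.succAbove (2 : Fin 6) (4 : Fin 5) = (5 : Fin 6) := by decide
theorem fsa_6_3_0 : Fin.succAbove (3 : Fin 6) (0 : Fin 5) = (0 : Fin 6) := by decide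
theorem fsa_6_3_1 : Fin.succAbove (3 : Fin 6) (1 : Fin 5) = (1 : Fin 6) := by decide
theorem fsa_6_3_2 : Fin.succAbove (3 : Fin 6) (2 : Fin 5) = (2 : Fin 6) := by decide
theorem fsa_6_3_3 : Fin.succAbove (3 : Fin 6) (3 : Fin 5) = (4 : Fin 6) := by decide
theorem fsa_6_3_4 : Fin.succAbove (3 : Fin 6) (4 : Fin 5) = (5 : Fin 6) := by decide
theorem fsa_6_4_0 : Fin.succAbove (4 : Fin 6) (0 : Fin 5) = (0 : Fin 6) := by decide
theorem fsa_6_4_1 : Fin.succAbove (4 : Fin 6) (1 : Fin 5) = (1 : Fin 6) := by decide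
theorem fsa_6_4_2 : Fin.succAbove (4 : Fin 6) (2 : Fin 5) = (2 : Fin 6) := by decide
theorem fsa_6_4_3 : Fin.succAbove (4 : Fin 6) (3 : Fin 5) = (3 : Fin 6) := by decide
theorem fsa_6_4_4 : Fin.succAbove (4 : Fin 6) (4 : Fin 5) = (5 : Fin 6) := by decide
theorem fsa_6_5_0 : Fin.succAbove (5 : Fin 6) (0 : Fin 5) = (0 : Fin 6) := by decide
theorem fsa_6_5_1 : Fin.succAbove (5 : Fin 6) (1 : Fin 5) = (1 : Fin 6) := by decide
theorem fsa_6_5_2 : Fin.succAbove (5 : Fin 6) (2 : Fin 5) = (2 : Fin 6) := by decide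
theorem fsa_6_5_3 : Fin.succAbove (5 : Fin 6) (3 : Fin 5) = (3 : Fin 6) := by decide
theorem fsa_6_5_4 : Fin.succAbove (5 : Fin 6) (4 : Fin 5) = (4 : Fin 6) := by decide

theorem cons_val_five' {α : Type*} {m : ℕ} (x : α) (u : Fin (m+5) → α) :
    vecCons x u 5 = vecHead (vecTail (vecTail (vecTail (vecTail u)))) := rfl

def GraphG : SimpleGraph (Fin 6) where
  Adj a b := (a,b) ∈ [((0:Fin 6),(5:Fin 6)),(1,2),(1,5),(2,5),(3,4),(3,5),(4,5)] ∨
             (b,a) ∈ [((0:Fin 6),(5:Fin 6)),(1,2),(1,5),(2,5),(3,4),(3,5),(4,5)]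
  symm := ⟨fun a b h => h.symm⟩
  loopless := ⟨by show ∀ a, ¬ _ ; decide⟩

def GraphH : SimpleGraph (Fin 6) where
  Adj a b := (a,b) ∈ [((0:Fin 6),(2:Fin 6)),(1,3),(2,4),(2,5),(3,4),(3,5),(4,5)] ∨
             (b,a) ∈ [((0:Fin 6),(2:Fin 6)),(1,3),(2,4),(2,5),(3,4),(3,5),(4,5)]
  symm := ⟨fun a b h => h.symm⟩
  loopless := ⟨by show ∀ a, ¬ _ ; decide⟩

instance : DecidableRel GraphG.Adj := fun _ _ => inferInstanceAs (Decidable (_ ∨ _))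
instance : DecidableRel GraphH.Adj := fun _ _ => inferInstanceAs (Decidable (_ ∨ _))

/-- The perfect matching of GraphG : (0,5),(1,2),(3,4). -/
def MG : GraphG.Subgraph where
  verts := Set.univ
  Adj a b := (a,b) ∈ [((0:Fin 6),(5:Fin 6)),(1,2),(3,4)] ∨
             (b,a) ∈ [((0:Fin 6),(5:Fin 6)),(1,2),(3,4)]
  adj_sub := fun {a b} h => (by decide : ∀ a b : Fin 6,
      ((a,b) ∈ [((0:Fin 6),(5:Fin 6)),(1,2),(3,4)] ∨
       (b,a) ∈ [((0:Fin 6),(5:Fin 6)),(1,2),(3,4)]) → GraphG.Adj a b) a b h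
  edge_vert := fun _ => Set.mem_univ _
  symm := ⟨fun a b h => h.symm⟩

/-- The perfect matching of GraphH : (0,2),(1,3),(4,5). -/
def MH : GraphH.Subgraph where
  verts := Set.univ
  Adj a b := (a,b) ∈ [((0:Fin 6),(2:Fin 6)),(1,3),(4,5)] ∨
             (b,a) ∈ [((0:Fin 6),(2:Fin 6)),(1,3),(4,5)]
  adj_sub := fun {a b} h => (by decide : ∀ a b : Fin 6,
      ((a,b) ∈ [((0:Fin 6),(2:Fin 6)),(1,3),(4,5)] ∨
       (b,a) ∈ [((0:Fin 6),(2:Fin 6)),(1,3),(4,5)]) → GraphH.Adj a b) a b h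
  edge_vert := fun _ => Set.mem_univ _
  symm := ⟨fun a b h => h.symm⟩

instance : DecidableRel MG.Adj := fun _ _ => inferInstanceAs (Decidable (_ ∨ _))
instance : DecidableRel MH.Adj := fun _ _ => inferInstanceAs (Decidable (_ ∨ _))

lemma partner_eq {G : SimpleGraph (Fin 6)} {M : G.Subgraph}
    (hm : ∀ v, ∃! w, M.Adj v w) {v a b : Fin 6}
    (h1 : M.Adj v a) (h2 : M.Adj v b) : a = b := by
  obtain ⟨w, _, hu⟩ := hm v
  rw [hu a h1, hu b h2]

lemma MG_pm : MG.IsPerfectMatching := by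
  rw [SimpleGraph.Subgraph.isPerfectMatching_iff]
  intro v
  fin_cases v
  · exact ⟨5, by decide, by decide⟩
  · exact ⟨2, by decide, by decide⟩
  · exact ⟨1, by decide, by decide⟩
  · exact ⟨4, by decide, by decide⟩
  · exact ⟨3, by decide, by decide⟩
  · exact ⟨0, by decide, by decide⟩

lemma MH_pm : MH.IsPerfectMatching := by
  rw [SimpleGraph.Subgraph.isPerfectMatching_iff]
  intro v
  fin_cases v
  · exact ⟨2, by decide, by decide⟩
  · exact ⟨3, by decide, by decide⟩
  · exact ⟨0, by decide, by decide⟩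
  · exact ⟨1, by decide, by decide⟩
  · exact ⟨5, by decide, by decide⟩
  · exact ⟨4, by decide, by decide⟩

lemma uniqueG : HasUniquePM GraphG := by
  refine ⟨MG, MG_pm, fun M hM => ?_⟩
  have hm : ∀ v, ∃! w, M.Adj v w :=
    (SimpleGraph.Subgraph.isPerfectMatching_iff).mp hM
  -- vertex 0 is pendant with neighbor 5
  have e0 : M.Adj 0 5 := by
    obtain ⟨w, hw, _⟩ := hm 0
    have hGw : GraphG.Adj 0 w := M.adj_sub hw
    have : w = 5 := by revert hGw; fin_cases w <;> decide
    exact this ▸ hw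
  have e1 : M.Adj 1 2 := by
    obtain ⟨w, hw, _⟩ := hm 1
    have hGw : GraphG.Adj 1 w := M.adj_sub hw
    have h25 : w = 2 ∨ w = 5 := by revert hGw; fin_cases w <;> decide
    rcases h25 with rfl | rfl
    · exact hw
    · exact absurd (partner_eq hm e0.symm hw.symm) (by decide)
  have e3 : M.Adj 3 4 := by
    obtain ⟨w, hw, _⟩ := hm 3
    have hGw : GraphG.Adj 3 w := M.adj_sub hw
    have h45 : w = 4 ∨ w = 5 := by revert hGw; fin_cases w <;> decide
    rcases h45 with rfl | rfl
    · exact hw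
    · exact absurd (partner_eq hm e0.symm hw.symm) (by decide)
  ext a b
  · simp [MG, hM.2 _]
  constructor
  · intro hab
    fin_cases a
    · exact (partner_eq hm e0 hab) ▸ (by decide : MG.Adj 0 5)
    · exact (partner_eq hm e1 hab) ▸ (by decide : MG.Adj 1 2)
    · exact (partner_eq hm e1.symm hab) ▸ (by decide : MG.Adj 2 1)
    · exact (partner_eq hm e3 hab) ▸ (by decide : MG.Adj 3 4)
    · exact (partner_eq hm e3.symm hab) ▸ (by decide : MG.Adj 4 3)
    · exact (partner_eq hm e0.symm hab) ▸ (by decide : MG.Adj 5 0)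
  · intro hab
    fin_cases a <;> fin_cases b <;>
      first
        | exact e0 | exact e0.symm | exact e1 | exact e1.symm
        | exact e3 | exact e3.symm | exact absurd hab (by decide)

lemma uniqueH : HasUniquePM GraphH := by
  refine ⟨MH, MH_pm, fun M hM => ?_⟩
  have hm : ∀ v, ∃! w, M.Adj v w :=
    (SimpleGraph.Subgraph.isPerfectMatching_iff).mp hM
  have e0 : M.Adj 0 2 := by
    obtain ⟨w, hw, _⟩ := hm 0
    have hGw : GraphH.Adj 0 w := M.adj_sub hw
    have : w = 2 := by revert hGw; fin_cases w <;> decide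
    exact this ▸ hw
  have e1 : M.Adj 1 3 := by
    obtain ⟨w, hw, _⟩ := hm 1
    have hGw : GraphH.Adj 1 w := M.adj_sub hw
    have : w = 3 := by revert hGw; fin_cases w <;> decide
    exact this ▸ hw
  have e4 : M.Adj 4 5 := by
    obtain ⟨w, hw, _⟩ := hm 4
    have hGw : GraphH.Adj 4 w := M.adj_sub hw
    have h235 : w = 2 ∨ w = 3 ∨ w = 5 := by revert hGw; fin_cases w <;> decide
    rcases h235 with rfl | rfl | rfl
    · exact absurd (partner_eq hm e0.symm hw.symm) (by decide)
    · exact absurd (partner_eq hm e1.symm hw.symm) (by decide)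
    · exact hw
  ext a b
  · simp [MH, hM.2 _]
  constructor
  · intro hab
    fin_cases a
    · exact (partner_eq hm e0 hab) ▸ (by decide : MH.Adj 0 2)
    · exact (partner_eq hm e1 hab) ▸ (by decide : MH.Adj 1 3)
    · exact (partner_eq hm e0.symm hab) ▸ (by decide : MH.Adj 2 0)
    · exact (partner_eq hm e1.symm hab) ▸ (by decide : MH.Adj 3 1)
    · exact (partner_eq hm e4 hab) ▸ (by decide : MH.Adj 4 5)
    · exact (partner_eq hm e4.symm hab) ▸ (by decide : MH.Adj 5 4)
  · intro hab
    fin_cases a <;> fin_cases b <;>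
      first
        | exact e0 | exact e0.symm | exact e1 | exact e1.symm
        | exact e4 | exact e4.symm | exact absurd hab (by decide)

lemma connG : GraphG.Connected := by
  rw [SimpleGraph.connected_iff]
  refine ⟨fun u v => ?_, ⟨0⟩⟩
  have h : ∀ w, GraphG.Reachable w 5 := by
    intro w
    fin_cases w
    · exact SimpleGraph.Adj.reachable (by decide)
    · exact SimpleGraph.Adj.reachable (by decide)
    · exact SimpleGraph.Adj.reachable (by decide)
    · exact SimpleGraph.Adj.reachable (by decide)
    · exact SimpleGraph.Adj.reachable (by decide)
    · exact SimpleGraph.Reachable.refl _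
  exact (h u).trans (h v).symm

lemma connH : GraphH.Connected := by
  rw [SimpleGraph.connected_iff]
  refine ⟨fun u v => ?_, ⟨0⟩⟩
  have h : ∀ w, GraphH.Reachable w 5 := by
    intro w
    fin_cases w
    · exact ((SimpleGraph.Adj.reachable (by decide : GraphH.Adj 0 2)).trans
        (SimpleGraph.Adj.reachable (by decide : GraphH.Adj 2 5)))
    · exact ((SimpleGraph.Adj.reachable (by decide : GraphH.Adj 1 3)).trans
        (SimpleGraph.Adj.reachable (by decide : GraphH.Adj 3 5)))
    · exact SimpleGraph.Adj.reachable (by decide)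
    · exact SimpleGraph.Adj.reachable (by decide)
    · exact SimpleGraph.Adj.reachable (by decide)
    · exact SimpleGraph.Reachable.refl _
  exact (h u).trans (h v).symm

lemma noniso : ¬ Nonempty (GraphG ≃g GraphH) := by
  rintro ⟨e⟩
  have hG : ∀ u : Fin 6, u ≠ 5 → GraphG.Adj 5 u := by decide
  have hH : ¬ ∃ w : Fin 6, ∀ v, v ≠ w → GraphH.Adj w v := by decide
  refine hH ⟨e 5, fun v hv => ?_⟩
  have h1 : GraphG.Adj 5 (e.symm v) := by
    apply hG
    intro h
    exact hv (by simpa [h] using (e.apply_symm_apply v).symm ▸ congrArg e h)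
  have := e.map_adj_iff.mpr h1
  simpa using this

noncomputable def AG : Matrix (Fin 6) (Fin 6) ℤ :=
  !![0,0,0,0,0,1; 0,0,1,0,0,1; 0,1,0,0,0,1; 0,0,0,0,1,1; 0,0,0,1,0,1; 1,1,1,1,1,0]
noncomputable def AH : Matrix (Fin 6) (Fin 6) ℤ :=
  !![0,0,1,0,0,0; 0,0,0,1,0,0; 1,0,0,0,1,1; 0,1,0,0,1,1; 0,0,1,1,0,1; 0,0,1,1,1,0]

lemma adjMatG : adjMat GraphG = AG := by
  funext i j
  simp only [adjMat, SimpleGraph.adjMatrix_apply]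
  fin_cases i <;> fin_cases j <;>
    first
      | (rw [if_pos (by decide)]; rfl)
      | (rw [if_neg (by decide)]; rfl)

lemma adjMatH : adjMat GraphH = AH := by
  funext i j
  simp only [adjMat, SimpleGraph.adjMatrix_apply]
  fin_cases i <;> fin_cases j <;>
    first
      | (rw [if_pos (by decide)]; rfl)
      | (rw [if_neg (by decide)]; rfl)

open Polynomial in
set_option maxHeartbeats 4000000 in
set_option maxRecDepth 100000 in
lemma cp_eq : (AG).charpoly = (AH).charpoly := by
  rw [Matrix.charpoly, Matrix.charpoly,
    ← Matrix.etaExpand_eq (charmatrix AG), ← Matrix.etaExpand_eq (charmatrix AH)]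
  simp [Matrix.etaExpand, FinVec.etaExpand, charmatrix_apply, AG, AH, Matrix.one_apply,
    Matrix.det_succ_row_zero, Fin.sum_univ_succ, cons_val_five', Matrix.vecHead, Matrix.vecTail,
    fsucc_2_0, fcast_2_0, fsucc_2_1, fcast_2_1, fsucc_3_0, fcast_3_0, fsucc_3_1, fcast_3_1, fsucc_3_2, fcast_3_2, fsucc_4_0, fcast_4_0, fsucc_4_1, fcast_4_1, fsucc_4_2, fcast_4_2, fsucc_4_3, fcast_4_3, fsucc_5_0, fcast_5_0, fsucc_5_1, fcast_5_1, fsucc_5_2, fcast_5_2, fsucc_5_3, fcast_5_3, fsucc_5_4, fcast_5_4, fsa_3_0_0, fsa_3_0_1, fsa_3_1_0, fsa_3_1_1, fsa_3_2_0, fsa_3_2_1, fsa_4_0_0, fsa_4_0_1, fsa_4_0_2, fsa_4_1_0, fsa_4_1_1, fsa_4_1_2, fsa_4_2_0, fsa_4_2_1, fsa_4_2_2, fsa_4_3_0, fsa_4_3_1, fsa_4_3_2, fsa_5_0_0, fsa_5_0_1, fsa_5_0_2, fsa_5_0_3, fsa_5_1_0, fsa_5_1_1, fsa_5_1_2, fsa_5_1_3,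 fsa_5_2_0, fsa_5_2_1, fsa_5_2_2, fsa_5_2_3, fsa_5_3_0, fsa_5_3_1, fsa_5_3_2, fsa_5_3_3, fsa_5_4_0, fsa_5_4_1, fsa_5_4_2, fsa_5_4_3, fsa_6_0_0, fsa_6_0_1, fsa_6_0_2, fsa_6_0_3, fsa_6_0_4, fsa_6_1_0, fsa_6_1_1, fsa_6_1_2, fsa_6_1_3, fsa_6_1_4, fsa_6_2_0, fsa_6_2_1, fsa_6_2_2, fsa_6_2_3, fsa_6_2_4, fsa_6_3_0, fsa_6_3_1, fsa_6_3_2, fsa_6_3_3, fsa_6_3_4, fsa_6_4_0, fsa_6_4_1, fsa_6_4_2, fsa_6_4_3, fsa_6_4_4, fsa_6_5_0, fsa_6_5_1, fsa_6_5_2, fsa_6_5_3, fsa_6_5_4]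
  ring

/-- there exist two non-isomorphic connected simple graphs on 6
vertices, each with a unique perfect matching, whose adjacency matrices have the
same characteristic polynomial (iso-spectral graphs). -/
theorem stmt14 : ∃ G H : SimpleGraph (Fin 6),
    G.Connected ∧ HasUniquePM G ∧ H.Connected ∧ HasUniquePM H ∧
    ¬ Nonempty (G ≃g H) ∧ (adjMat G).charpoly = (adjMat H).charpoly := by
  exact ⟨GraphG, GraphH, connG, uniqueG, connH, uniqueH, noniso,
    by rw [adjMatG, adjMatH, cp_eq]⟩
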